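/- arXiv:2208.07438 — 3 statements merged into one kernel-verified Lean document; each statement's English description precedes it below -/
import Mathlib

section
/- For any two convex bodies K, K' in R^d, the Euclidean distance between their Steiner points satisfies \|S(K) - S(K')\|_2 \le \sqrt{d} \cdot \delta_{Haus}(K, K'), where \delta_{Haus} is the Hausdorff distance. -/
open MeasureTheory Metric

/-- The support function `h_K(θ) = max_{x ∈ K} ⟨x, θ⟩` of a set `K ⊆ ℝ^d`. -/
noncomputable def suppFn {d : ℕ} (K : Set (EuclideanSpace ℝ (Fin d)))
    (θ : EuclideanSpace ℝ (Fin d)) : ℝ :=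
  sSup ((fun x => (inner ℝ x θ : ℝ)) '' K)

/-- The normalized uniform (Haar) measure on the unit sphere of `ℝ^d`. -/
noncomputable def sphereMeasure (d : ℕ) : Measure (EuclideanSpace ℝ (Fin d)) :=
  (μH[(d : ℝ) - 1] (Metric.sphere (0 : EuclideanSpace ℝ (Fin d)) 1))⁻¹ •
    (μH[(d : ℝ) - 1] : Measure (EuclideanSpace ℝ (Fin d))).restrict
      (Metric.sphere (0 : EuclideanSpace ℝ (Fin d)) 1)

/-- The Steiner point `S(K) = d ∫_{S^{d-1}} θ h_K(θ) dσ(θ)`. -/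
noncomputable def steinerPoint {d : ℕ} (K : Set (EuclideanSpace ℝ (Fin d))) :
    EuclideanSpace ℝ (Fin d) :=
  (d : ℝ) • ∫ θ, suppFn K θ • θ ∂(sphereMeasure d)

section Aux

variable {d : ℕ} {K K' : Set (EuclideanSpace ℝ (Fin d))} {θ θ' : EuclideanSpace ℝ (Fin d)}

lemma inner_continuous' (v : EuclideanSpace ℝ (Fin d)) :
    Continuous (fun x : EuclideanSpace ℝ (Fin d) => (inner ℝ x v : ℝ)) :=
  continuous_id.inner continuous_const

lemma le_suppFn (hKc : IsCompact K) {x} (hx : x ∈ K) : (inner ℝ x θ : ℝ) ≤ suppFn K θ :=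
  le_csSup ((hKc.image (inner_continuous' θ)).bddAbove) ⟨x, hx, rfl⟩

lemma suppFn_le (hK : K.Nonempty) {c : ℝ} (h : ∀ x ∈ K, (inner ℝ x θ : ℝ) ≤ c) :
    suppFn K θ ≤ c :=
  csSup_le (hK.image _) (by rintro y ⟨x, hx, rfl⟩; exact h x hx)

lemma exists_suppFn_eq (hKc : IsCompact K) (hK : K.Nonempty) :
    ∃ x ∈ K, suppFn K θ = (inner ℝ x θ : ℝ) := by
  have := (hKc.image (inner_continuous' θ)).sSup_mem (hK.image _)
  obtain ⟨x, hx, hx'⟩ := this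
  exact ⟨x, hx, hx'.symm⟩

lemma abs_suppFn_le (hKc : IsCompact K) (hK : K.Nonempty) {R : ℝ}
    (hR : ∀ x ∈ K, ‖x‖ ≤ R) : |suppFn K θ| ≤ R * ‖θ‖ := by
  rw [abs_le]
  obtain ⟨x₀, hx₀⟩ := hK
  constructor
  · have h1 : (inner ℝ x₀ θ : ℝ) ≤ suppFn K θ := le_suppFn hKc hx₀
    have h2 : -(R * ‖θ‖) ≤ (inner ℝ x₀ θ : ℝ) := by
      have := abs_real_inner_le_norm x₀ θ
      have h3 : ‖x₀‖ * ‖θ‖ ≤ R * ‖θ‖ :=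
        mul_le_mul_of_nonneg_right (hR x₀ hx₀) (norm_nonneg _)
      nlinarith [abs_nonneg (inner ℝ x₀ θ : ℝ), neg_abs_le (inner ℝ x₀ θ : ℝ)]
    linarith
  · refine suppFn_le ⟨x₀, hx₀⟩ fun x hx => ?_
    calc (inner ℝ x θ : ℝ) ≤ ‖x‖ * ‖θ‖ := real_inner_le_norm x θ
    _ ≤ R * ‖θ‖ := mul_le_mul_of_nonneg_right (hR x hx) (norm_nonneg _)

lemma suppFn_sub_le_hausdorff (hKc : IsCompact K) (hK : K.Nonempty)
    (hK'c : IsCompact K') (hK' : K'.Nonempty) :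
    suppFn K θ - suppFn K' θ ≤ Metric.hausdorffDist K K' * ‖θ‖ := by
  obtain ⟨x, hx, hxe⟩ := exists_suppFn_eq hKc hK (θ := θ)
  obtain ⟨y, hy, hyd⟩ := hK'c.exists_infDist_eq_dist hK' x
  have hfin : EMetric.hausdorffEdist K K' ≠ ⊤ :=
    Metric.hausdorffEdist_ne_top_of_nonempty_of_bounded hK hK' hKc.isBounded hK'c.isBounded
  have h1 : dist x y ≤ Metric.hausdorffDist K K' := by
    rw [← hyd]; exact Metric.infDist_le_hausdorffDist_of_mem hx hfin
  have h2 : (inner ℝ x θ : ℝ) - (inner ℝ y θ : ℝ) ≤ dist x y * ‖θ‖ := by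
    have : (inner ℝ x θ : ℝ) - (inner ℝ y θ : ℝ) = (inner ℝ (x - y) θ : ℝ) := by
      rw [inner_sub_left]
    rw [this, dist_eq_norm]
    exact real_inner_le_norm _ _
  have h3 : (inner ℝ y θ : ℝ) ≤ suppFn K' θ := le_suppFn hK'c hy
  have h4 : dist x y * ‖θ‖ ≤ Metric.hausdorffDist K K' * ‖θ‖ :=
    mul_le_mul_of_nonneg_right h1 (norm_nonneg _)
  linarith [hxe ▸ h2]

lemma abs_suppFn_sub_le_hausdorff (hKc : IsCompact K) (hK : K.Nonempty)
    (hK'c : IsCompact K') (hK' : K'.Nonempty) :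
    |suppFn K θ - suppFn K' θ| ≤ Metric.hausdorffDist K K' * ‖θ‖ := by
  rw [abs_sub_le_iff]
  refine ⟨suppFn_sub_le_hausdorff hKc hK hK'c hK', ?_⟩
  rw [Metric.hausdorffDist_comm]
  exact suppFn_sub_le_hausdorff hK'c hK' hKc hK

lemma suppFn_lipschitz (hKc : IsCompact K) (hK : K.Nonempty) {R : ℝ}
    (hR : ∀ x ∈ K, ‖x‖ ≤ R) (θ θ' : EuclideanSpace ℝ (Fin d)) :
    suppFn K θ - suppFn K θ' ≤ R * ‖θ - θ'‖ := by
  obtain ⟨x, hx, hxe⟩ := exists_suppFn_eq hKc hK (θ := θ)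
  have h1 : (inner ℝ x θ : ℝ) - (inner ℝ x θ' : ℝ) ≤ R * ‖θ - θ'‖ := by
    have : (inner ℝ x θ : ℝ) - (inner ℝ x θ' : ℝ) = (inner ℝ x (θ - θ') : ℝ) := by
      rw [inner_sub_right]
    rw [this]
    calc (inner ℝ x (θ - θ') : ℝ) ≤ ‖x‖ * ‖θ - θ'‖ := real_inner_le_norm _ _
    _ ≤ R * ‖θ - θ'‖ := mul_le_mul_of_nonneg_right (hR x hx) (norm_nonneg _)
  have h3 : (inner ℝ x θ' : ℝ) ≤ suppFn K θ' := le_suppFn hKc hx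
  linarith [hxe ▸ h1]

lemma suppFn_continuous (hKc : IsCompact K) (hK : K.Nonempty) :
    Continuous (suppFn K) := by
  obtain ⟨R, hR⟩ := hKc.isBounded.exists_norm_le
  have hR0 : 0 ≤ R := le_trans (norm_nonneg _) (hR _ hK.choose_spec)
  refine (LipschitzWith.of_dist_le_mul (K := ⟨R, hR0⟩) fun θ θ' => ?_).continuous
  rw [Real.dist_eq, dist_eq_norm]
  rw [abs_sub_le_iff]
  exact ⟨suppFn_lipschitz hKc hK hR θ θ', by
    rw [norm_sub_rev]; exact suppFn_lipschitz hKc hK hR θ' θ⟩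

lemma ae_sphere : ∀ᵐ θ ∂(sphereMeasure d), θ ∈ sphere (0 : EuclideanSpace ℝ (Fin d)) 1 :=
  Measure.ae_smul_measure (ae_restrict_mem isClosed_sphere.measurableSet) _

lemma integrable_sphereMeasure {F : Type*} [NormedAddCommGroup F]
    {f : EuclideanSpace ℝ (Fin d) → F} (hf : Continuous f) (C : ℝ)
    (hC : ∀ θ ∈ sphere (0 : EuclideanSpace ℝ (Fin d)) 1, ‖f θ‖ ≤ C) :
    Integrable f (sphereMeasure d) := by
  unfold sphereMeasure
  set c := μH[(d : ℝ) - 1] (sphere (0 : EuclideanSpace ℝ (Fin d)) 1) with hc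
  rcases eq_or_ne c 0 with h0 | h0
  · rw [Measure.restrict_eq_zero.2 h0, smul_zero]
    exact integrable_zero_measure
  rcases eq_or_ne c ⊤ with htop | htop
  · rw [htop, ENNReal.inv_top, zero_smul]
    exact integrable_zero_measure
  · refine Integrable.smul_measure ?_ (ENNReal.inv_ne_top.2 h0)
    haveI : IsFiniteMeasure ((μH[(d : ℝ) - 1] :
        Measure (EuclideanSpace ℝ (Fin d))).restrict (sphere 0 1)) := by
      constructor
      rw [Measure.restrict_apply_univ]
      exact lt_of_le_of_ne le_top htop
    refine Integrable.mono' (integrable_const C) hf.aestronglyMeasurable ?_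
    filter_upwards [ae_restrict_mem isClosed_sphere.measurableSet] with θ hθ
    exact hC θ hθ

lemma sphere_zero_empty : sphere (0 : EuclideanSpace ℝ (Fin 0)) 1 = ∅ := by
  ext x
  simp only [mem_sphere_zero_iff_norm, Set.mem_empty_iff_false, iff_false]
  have : x = 0 := Subsingleton.elim x 0
  rw [this, norm_zero]
  norm_num

lemma hausdorff_image_isometryEquiv (e : EuclideanSpace ℝ (Fin d) ≃ₗᵢ[ℝ] EuclideanSpace ℝ (Fin d))
    (hd : 0 ≤ (d : ℝ) - 1) (s : Set (EuclideanSpace ℝ (Fin d))) :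
    μH[(d : ℝ) - 1] (e '' s) = μH[(d : ℝ) - 1] s := by
  refine le_antisymm ?_ ?_
  · simpa using e.isometry.lipschitz.hausdorffMeasure_image_le hd s
  · have := e.symm.isometry.lipschitz.hausdorffMeasure_image_le hd (e '' s)
    simp only [ENNReal.coe_one, ENNReal.one_rpow, one_mul] at this ⊢
    refine le_trans (le_of_eq ?_) this
    rw [← Set.image_comp]
    simp [Function.comp]

lemma preimage_sphere_isometryEquiv
    (e : EuclideanSpace ℝ (Fin d) ≃ₗᵢ[ℝ] EuclideanSpace ℝ (Fin d)) :
    (⇑e) ⁻¹' (sphere (0 : EuclideanSpace ℝ (Fin d)) 1) = sphere 0 1 := by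
  ext x
  simp [mem_sphere_zero_iff_norm, e.norm_map]

lemma measurePreserving_sphereMeasure (hd : 0 ≤ (d : ℝ) - 1)
    (e : EuclideanSpace ℝ (Fin d) ≃ₗᵢ[ℝ] EuclideanSpace ℝ (Fin d)) :
    MeasurePreserving e (sphereMeasure d) (sphereMeasure d) := by
  have hme : Measurable (⇑e) := e.continuous.measurable
  constructor
  · exact hme
  have hmap : Measure.map e ((μH[(d : ℝ) - 1] :
      Measure (EuclideanSpace ℝ (Fin d))).restrict (sphere 0 1)) =
      (μH[(d : ℝ) - 1] : Measure (EuclideanSpace ℝ (Fin d))).restrict (sphere 0 1) := by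
    ext s hs
    rw [Measure.map_apply hme hs, Measure.restrict_apply (hme hs), Measure.restrict_apply hs]
    have h1 : (⇑e) ⁻¹' s ∩ sphere 0 1 = (⇑e) ⁻¹' (s ∩ sphere 0 1) := by
      rw [Set.preimage_inter, preimage_sphere_isometryEquiv]
    rw [h1]
    have h2 : (⇑e) ⁻¹' (s ∩ sphere 0 1) = e.symm '' (s ∩ sphere 0 1) := by
      exact (Set.eq_preimage_iff_image_eq e.bijective).mpr
        (by rw [← Set.image_comp]; simp [Function.comp]) |>.symm
    rw [h2, hausdorff_image_isometryEquiv e.symm hd]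
  unfold sphereMeasure
  rw [Measure.map_smul, hmap]

lemma isProbability_sphereMeasure
    (h0 : μH[(d : ℝ) - 1] (sphere (0 : EuclideanSpace ℝ (Fin d)) 1) ≠ 0)
    (htop : μH[(d : ℝ) - 1] (sphere (0 : EuclideanSpace ℝ (Fin d)) 1) ≠ ⊤) :
    IsProbabilityMeasure (sphereMeasure d) := by
  constructor
  rw [sphereMeasure, Measure.smul_apply, Measure.restrict_apply_univ, smul_eq_mul,
    ENNReal.inv_mul_cancel h0 htop]

lemma d_ge_one_of_ne_zero
    (h0 : μH[(d : ℝ) - 1] (sphere (0 : EuclideanSpace ℝ (Fin d)) 1) ≠ 0) : 1 ≤ d := by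
  by_contra h
  push_neg at h
  interval_cases d
  exact h0 (by rw [sphere_zero_empty]; exact measure_empty)

lemma integral_inner_sq
    (h0 : μH[(d : ℝ) - 1] (sphere (0 : EuclideanSpace ℝ (Fin d)) 1) ≠ 0)
    (htop : μH[(d : ℝ) - 1] (sphere (0 : EuclideanSpace ℝ (Fin d)) 1) ≠ ⊤)
    {u : EuclideanSpace ℝ (Fin d)} (hu : ‖u‖ = 1) :
    ∫ θ, (inner ℝ θ u : ℝ) ^ 2 ∂(sphereMeasure d) = (d : ℝ)⁻¹ := by
  haveI := isProbability_sphereMeasure h0 htop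
  have hd1 : 1 ≤ d := d_ge_one_of_ne_zero h0
  have hd : 0 ≤ (d : ℝ) - 1 := by
    have : (1 : ℝ) ≤ d := by exact_mod_cast hd1
    linarith
  have hint : ∀ v : EuclideanSpace ℝ (Fin d),
      Integrable (fun θ => (inner ℝ θ v : ℝ) ^ 2) (sphereMeasure d) := by
    intro v
    refine integrable_sphereMeasure ((continuous_id.inner continuous_const).pow 2)
      (‖v‖ ^ 2) fun θ hθ => ?_
    rw [mem_sphere_zero_iff_norm] at hθ
    have := abs_real_inner_le_norm θ v
    rw [Real.norm_eq_abs, abs_pow, hθ] at *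
    nlinarith [abs_nonneg (inner ℝ θ v : ℝ)]
  have hinv : ∀ v w : EuclideanSpace ℝ (Fin d), ‖v‖ = 1 → ‖w‖ = 1 →
      ∫ θ, (inner ℝ θ v : ℝ) ^ 2 ∂(sphereMeasure d)
        = ∫ θ, (inner ℝ θ w : ℝ) ^ 2 ∂(sphereMeasure d) := by
    intro v w hv hw
    set e := Submodule.reflection (Submodule.span ℝ {v - w})ᗮ with he
    have hev : e v = w := Submodule.reflection_sub (by rw [hv, hw])
    have hmp := measurePreserving_sphereMeasure hd e
    have := hmp.integral_comp e.toHomeomorph.measurableEmbedding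
      (fun θ => (inner ℝ θ w : ℝ) ^ 2)
    rw [← this]
    congr 1
    ext θ
    rw [← hev]
    have : (inner ℝ (e θ) (e v) : ℝ) = (inner ℝ θ v : ℝ) := e.inner_map_map θ v
    rw [this]
  set b := EuclideanSpace.basisFun (Fin d) ℝ with hb
  have hsum : ∑ i : Fin d, ∫ θ, (inner ℝ θ (b i) : ℝ) ^ 2 ∂(sphereMeasure d) = 1 := by
    rw [← integral_finset_sum _ (fun i _ => hint (b i))]
    have h2 : ∀ θ : EuclideanSpace ℝ (Fin d),
        ∑ i : Fin d, (inner ℝ θ (b i) : ℝ) ^ 2 = ‖θ‖ ^ 2 := by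
      intro θ
      have := b.sum_inner_mul_inner θ θ
      rw [real_inner_self_eq_norm_sq] at this
      rw [← this]
      congr 1
      ext i
      rw [real_inner_comm (b i) θ]
      ring
    simp_rw [h2]
    have h3 : ∫ θ, ‖θ‖ ^ 2 ∂(sphereMeasure d) = ∫ _θ, (1 : ℝ) ∂(sphereMeasure d) := by
      refine integral_congr_ae ?_
      filter_upwards [ae_sphere] with θ hθ
      rw [mem_sphere_zero_iff_norm] at hθ
      rw [hθ]; norm_num
    rw [h3, integral_const, probReal_univ]
    simp
  have hval : ∀ i : Fin d, ∫ θ, (inner ℝ θ (b i) : ℝ) ^ 2 ∂(sphereMeasure d)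
      = ∫ θ, (inner ℝ θ u : ℝ) ^ 2 ∂(sphereMeasure d) :=
    fun i => hinv (b i) u (b.orthonormal.1 i) hu
  rw [Finset.sum_congr rfl fun i _ => hval i, Finset.sum_const, Finset.card_univ,
    Fintype.card_fin, nsmul_eq_mul] at hsum
  have hd0 : (d : ℝ) ≠ 0 := by positivity
  field_simp at hsum ⊢
  linarith

lemma integral_abs_inner_le
    (h0 : μH[(d : ℝ) - 1] (sphere (0 : EuclideanSpace ℝ (Fin d)) 1) ≠ 0)
    (htop : μH[(d : ℝ) - 1] (sphere (0 : EuclideanSpace ℝ (Fin d)) 1) ≠ ⊤)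
    {u : EuclideanSpace ℝ (Fin d)} (hu : ‖u‖ = 1) :
    ∫ θ, |(inner ℝ θ u : ℝ)| ∂(sphereMeasure d) ≤ Real.sqrt ((d : ℝ)⁻¹) := by
  haveI := isProbability_sphereMeasure h0 htop
  set X : EuclideanSpace ℝ (Fin d) → ℝ := fun θ => |(inner ℝ θ u : ℝ)| with hX
  have hXc : Continuous X := (continuous_id.inner continuous_const).abs
  have hXb : ∀ᵐ θ ∂(sphereMeasure d), ‖X θ‖ ≤ 1 := by
    filter_upwards [ae_sphere] with θ hθ
    rw [mem_sphere_zero_iff_norm] at hθ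
    have := abs_real_inner_le_norm θ u
    rw [hθ, hu, one_mul] at this
    rwa [Real.norm_eq_abs, abs_abs]
  have hX2 : MemLp X 2 (sphereMeasure d) :=
    MemLp.of_bound hXc.aestronglyMeasurable 1 hXb
  have hvar := ProbabilityTheory.variance_nonneg X (sphereMeasure d)
  rw [ProbabilityTheory.variance_eq_sub hX2] at hvar
  have hsq : ∫ θ, (X ^ 2) θ ∂(sphereMeasure d) = (d : ℝ)⁻¹ := by
    rw [← integral_inner_sq h0 htop hu]
    congr 1
    funext θ
    simp [hX, sq_abs]
  rw [hsq] at hvar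
  have hint0 : 0 ≤ ∫ θ, X θ ∂(sphereMeasure d) :=
    integral_nonneg fun θ => abs_nonneg _
  nlinarith [Real.sq_sqrt (by positivity : (0:ℝ) ≤ (d : ℝ)⁻¹),
    Real.sqrt_nonneg ((d : ℝ)⁻¹)]

end Aux

/-- The Steiner point is `√d`-Lipschitz with respect to the Hausdorff distance:
`‖S(K) - S(K')‖₂ ≤ √d ⋅ δ_Haus(K, K')`. -/
theorem stmt_2 {d : ℕ} (K K' : Set (EuclideanSpace ℝ (Fin d)))
    (hK : K.Nonempty) (hK' : K'.Nonempty) (hKc : IsCompact K) (hK'c : IsCompact K')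
    (hKconv : Convex ℝ K) (hK'conv : Convex ℝ K') :
    ‖steinerPoint K - steinerPoint K'‖ ≤ Real.sqrt d * Metric.hausdorffDist K K' := by
  have hδ0 : 0 ≤ Metric.hausdorffDist K K' := Metric.hausdorffDist_nonneg
  have hRHS0 : 0 ≤ Real.sqrt d * Metric.hausdorffDist K K' :=
    mul_nonneg (Real.sqrt_nonneg _) hδ0
  rcases eq_or_ne (μH[(d : ℝ) - 1] (sphere (0 : EuclideanSpace ℝ (Fin d)) 1)) 0 with h0 | h0
  · have hz : sphereMeasure d = 0 := by
      rw [sphereMeasure, Measure.restrict_eq_zero.2 h0, smul_zero]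
    simp only [steinerPoint, hz, integral_zero_measure, smul_zero, sub_zero, norm_zero]
    exact hRHS0
  rcases eq_or_ne (μH[(d : ℝ) - 1] (sphere (0 : EuclideanSpace ℝ (Fin d)) 1)) ⊤ with htop | htop
  · have hz : sphereMeasure d = 0 := by
      rw [sphereMeasure, htop, ENNReal.inv_top, zero_smul]
    simp only [steinerPoint, hz, integral_zero_measure, smul_zero, sub_zero, norm_zero]
    exact hRHS0
  haveI := isProbability_sphereMeasure h0 htop
  have hd1 : 1 ≤ d := d_ge_one_of_ne_zero h0
  have hdR : (1 : ℝ) ≤ (d : ℝ) := by exact_mod_cast hd1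
  have hd0 : (0 : ℝ) < d := by linarith
  -- global bound for both bodies
  obtain ⟨R, hR⟩ := (hKc.union hK'c).isBounded.exists_norm_le
  have hRK : ∀ x ∈ K, ‖x‖ ≤ R := fun x hx => hR x (Or.inl hx)
  have hRK' : ∀ x ∈ K', ‖x‖ ≤ R := fun x hx => hR x (Or.inr hx)
  have hR0 : 0 ≤ R := le_trans (norm_nonneg _) (hRK _ hK.choose_spec)
  -- integrability of the main integrands
  have hfK : Integrable (fun θ => suppFn K θ • θ) (sphereMeasure d) := by
    refine integrable_sphereMeasure ((suppFn_continuous hKc hK).smul continuous_id) R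
      fun θ hθ => ?_
    rw [mem_sphere_zero_iff_norm] at hθ
    rw [norm_smul, hθ, mul_one, Real.norm_eq_abs]
    have := abs_suppFn_le (θ := θ) hKc hK hRK
    rwa [hθ, mul_one] at this
  have hfK' : Integrable (fun θ => suppFn K' θ • θ) (sphereMeasure d) := by
    refine integrable_sphereMeasure ((suppFn_continuous hK'c hK').smul continuous_id) R
      fun θ hθ => ?_
    rw [mem_sphere_zero_iff_norm] at hθ
    rw [norm_smul, hθ, mul_one, Real.norm_eq_abs]
    have := abs_suppFn_le (θ := θ) hK'c hK' hRK'
    rwa [hθ, mul_one] at this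
  -- trivial case
  rcases eq_or_ne (steinerPoint K - steinerPoint K') 0 with hS | hS
  · rw [hS, norm_zero]; exact hRHS0
  set w := steinerPoint K - steinerPoint K' with hw
  have hN : 0 < ‖w‖ := norm_pos_iff.2 hS
  set u := ‖w‖⁻¹ • w with hu'
  have hu : ‖u‖ = 1 := by
    rw [hu', norm_smul, norm_inv, norm_norm, inv_mul_cancel₀ hN.ne']
  have hkey : ‖w‖ = (inner ℝ w u : ℝ) := by
    rw [hu', real_inner_smul_right, real_inner_self_eq_norm_sq, sq, ← mul_assoc,
      inv_mul_cancel₀ hN.ne', one_mul]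
  have hsub : (fun θ => (suppFn K θ - suppFn K' θ) • θ)
      = (fun θ : EuclideanSpace ℝ (Fin d) => suppFn K θ • θ - suppFn K' θ • θ) :=
    funext fun θ => sub_smul _ _ _
  have hwint : w = (d : ℝ) • ∫ θ, (suppFn K θ - suppFn K' θ) • θ ∂(sphereMeasure d) := by
    rw [hw, steinerPoint, steinerPoint, ← smul_sub, ← integral_sub hfK hfK', hsub]
  have hintg : Integrable (fun θ => (suppFn K θ - suppFn K' θ) • θ) (sphereMeasure d) := by
    rw [hsub]; exact hfK.sub hfK'
  have hiw : (inner ℝ w u : ℝ)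
      = (d : ℝ) * ∫ θ, (suppFn K θ - suppFn K' θ) * (inner ℝ θ u : ℝ) ∂(sphereMeasure d) := by
    rw [hwint, real_inner_smul_left]
    congr 1
    have h := integral_inner (𝕜 := ℝ) hintg u
    rw [real_inner_comm, ← h]
    refine integral_congr_ae (Filter.Eventually.of_forall fun θ => ?_)
    show (inner ℝ u ((suppFn K θ - suppFn K' θ) • θ) : ℝ) = _
    rw [real_inner_comm, real_inner_smul_left]
  -- integrability for the comparison
  have hint1 : Integrable (fun θ => (suppFn K θ - suppFn K' θ) * (inner ℝ θ u : ℝ))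
      (sphereMeasure d) := by
    refine integrable_sphereMeasure
      (((suppFn_continuous hKc hK).sub (suppFn_continuous hK'c hK')).mul
        (continuous_id.inner continuous_const)) (2 * R) fun θ hθ => ?_
    rw [mem_sphere_zero_iff_norm] at hθ
    rw [Real.norm_eq_abs, abs_mul]
    have h1 := abs_suppFn_le (θ := θ) hKc hK hRK
    have h2 := abs_suppFn_le (θ := θ) hK'c hK' hRK'
    rw [hθ, mul_one] at h1 h2
    have h3 : |suppFn K θ - suppFn K' θ| ≤ 2 * R := by
      have := abs_sub_abs_le_abs_sub (suppFn K θ) (suppFn K' θ)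
      have := abs_sub (suppFn K θ) (suppFn K' θ)
      calc |suppFn K θ - suppFn K' θ| ≤ |suppFn K θ| + |suppFn K' θ| := abs_sub _ _
      _ ≤ 2 * R := by linarith
    have h4 : |(inner ℝ θ u : ℝ)| ≤ 1 := by
      have := abs_real_inner_le_norm θ u
      rwa [hθ, hu, one_mul] at this
    nlinarith [abs_nonneg (suppFn K θ - suppFn K' θ), abs_nonneg (inner ℝ θ u : ℝ)]
  have hint2 : Integrable (fun θ => Metric.hausdorffDist K K' * |(inner ℝ θ u : ℝ)|)
      (sphereMeasure d) := by
    refine integrable_sphereMeasure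
      (continuous_const.mul (continuous_id.inner continuous_const).abs)
      (Metric.hausdorffDist K K') fun θ hθ => ?_
    rw [mem_sphere_zero_iff_norm] at hθ
    have h4 : |(inner ℝ θ u : ℝ)| ≤ 1 := by
      have := abs_real_inner_le_norm θ u
      rwa [hθ, hu, one_mul] at this
    rw [Real.norm_eq_abs, abs_mul, abs_of_nonneg hδ0, abs_abs]
    nlinarith [abs_nonneg (inner ℝ θ u : ℝ)]
  have hmono : ∫ θ, (suppFn K θ - suppFn K' θ) * (inner ℝ θ u : ℝ) ∂(sphereMeasure d)
      ≤ ∫ θ, Metric.hausdorffDist K K' * |(inner ℝ θ u : ℝ)| ∂(sphereMeasure d) := by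
    refine integral_mono_ae hint1 hint2 ?_
    filter_upwards [ae_sphere] with θ hθ
    rw [mem_sphere_zero_iff_norm] at hθ
    have h1 : |suppFn K θ - suppFn K' θ| ≤ Metric.hausdorffDist K K' := by
      have := abs_suppFn_sub_le_hausdorff (θ := θ) hKc hK hK'c hK'
      rwa [hθ, mul_one] at this
    calc (suppFn K θ - suppFn K' θ) * (inner ℝ θ u : ℝ)
        ≤ |(suppFn K θ - suppFn K' θ) * (inner ℝ θ u : ℝ)| := le_abs_self _
      _ = |suppFn K θ - suppFn K' θ| * |(inner ℝ θ u : ℝ)| := abs_mul _ _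
      _ ≤ Metric.hausdorffDist K K' * |(inner ℝ θ u : ℝ)| :=
          mul_le_mul_of_nonneg_right h1 (abs_nonneg _)
  have habs : ∫ θ, |(inner ℝ θ u : ℝ)| ∂(sphereMeasure d) ≤ Real.sqrt ((d : ℝ)⁻¹) :=
    integral_abs_inner_le h0 htop hu
  have hconst : ∫ θ, Metric.hausdorffDist K K' * |(inner ℝ θ u : ℝ)| ∂(sphereMeasure d)
      = Metric.hausdorffDist K K' * ∫ θ, |(inner ℝ θ u : ℝ)| ∂(sphereMeasure d) :=
    integral_const_mul _ _
  have hchain : ‖w‖ ≤ (d : ℝ) * (Metric.hausdorffDist K K' * Real.sqrt ((d : ℝ)⁻¹)) := by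
    rw [hkey, hiw]
    refine mul_le_mul_of_nonneg_left ?_ (le_of_lt hd0)
    calc ∫ θ, (suppFn K θ - suppFn K' θ) * (inner ℝ θ u : ℝ) ∂(sphereMeasure d)
        ≤ Metric.hausdorffDist K K' * ∫ θ, |(inner ℝ θ u : ℝ)| ∂(sphereMeasure d) := by
          rw [← hconst]; exact hmono
      _ ≤ Metric.hausdorffDist K K' * Real.sqrt ((d : ℝ)⁻¹) :=
          mul_le_mul_of_nonneg_left habs hδ0
  have hfinal : (d : ℝ) * (Metric.hausdorffDist K K' * Real.sqrt ((d : ℝ)⁻¹))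
      = Real.sqrt d * Metric.hausdorffDist K K' := by
    rw [Real.sqrt_inv]
    have hs : Real.sqrt d * Real.sqrt d = (d : ℝ) := Real.mul_self_sqrt (le_of_lt hd0)
    have hs0 : Real.sqrt d ≠ 0 := by positivity
    field_simp
    nlinarith [hs]
  rw [← hfinal]
  exact hchain
end

section
/- Let X be a real random variable with density f that satisfies f(t) \ge L for all t in [Q_q(X) - r, Q_q(X) + r], where L, r > 0 and Q_q(X) is the q-quantile. Let Y be any real random variable with \sup_t |F_X(t) - F_Y(t)| \le \alpha_1 for some \alpha_1 with 2\alpha_1/L < r. Then |Q_q(X) - Q_q(Y)| \le 2\alpha_1/L. -/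
open MeasureTheory

/-- The CDF of a (law of a) real random variable. -/
noncomputable def rcdf (μ : Measure ℝ) (t : ℝ) : ℝ := (μ (Set.Iic t)).toReal

/-- The `q`-quantile `Q_q = inf {t : P(X ≤ t) ≥ q}`. -/
noncomputable def quantile (μ : Measure ℝ) (q : ℝ) : ℝ := sInf {t | q ≤ rcdf μ t}

lemma rcdf_mono (μ : Measure ℝ) [IsProbabilityMeasure μ] : Monotone (rcdf μ) :=
  fun a b hab => ENNReal.toReal_mono (measure_ne_top _ _)
    (measure_mono (Set.Iic_subset_Iic.2 hab))

lemma rcdf_eq_cdf (μ : Measure ℝ) [IsProbabilityMeasure μ] :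
    rcdf μ = ProbabilityTheory.cdf μ :=
  funext fun x => (ProbabilityTheory.cdf_eq_real μ x).symm

/-- existence of a point with small cdf -/
lemma exists_rcdf_lt (μ : Measure ℝ) [IsProbabilityMeasure μ] {q : ℝ} (hq : 0 < q) :
    ∃ t, rcdf μ t < q := by
  have h := ProbabilityTheory.tendsto_cdf_atBot μ
  have := (h.eventually (eventually_lt_nhds hq)).exists
  obtain ⟨t, ht⟩ := this
  exact ⟨t, by rw [rcdf_eq_cdf]; exact ht⟩

lemma exists_lt_rcdf (μ : Measure ℝ) [IsProbabilityMeasure μ] {q : ℝ} (hq : q < 1) :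
    ∃ t, q < rcdf μ t := by
  have h := ProbabilityTheory.tendsto_cdf_atTop μ
  obtain ⟨t, ht⟩ := (h.eventually (eventually_gt_nhds hq)).exists
  exact ⟨t, by rw [rcdf_eq_cdf]; exact ht⟩

lemma bddBelow_q_set (μ : Measure ℝ) [IsProbabilityMeasure μ] {q : ℝ} (hq : 0 < q) :
    BddBelow {t | q ≤ rcdf μ t} := by
  obtain ⟨t₀, ht₀⟩ := exists_rcdf_lt μ hq
  refine ⟨t₀, fun s hs => ?_⟩
  by_contra hc
  push_neg at hc
  exact absurd (lt_of_le_of_lt (le_trans hs (rcdf_mono μ hc.le)) ht₀) (lt_irrefl q)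


/-- If `X` has a density bounded below by `L` on `[Q_q(X) - r, Q_q(X) + r]` and
`sup_t |F_X(t) - F_Y(t)| ≤ α₁` with `2α₁/L < r`, then `|Q_q(X) - Q_q(Y)| ≤ 2α₁/L`. -/
theorem stmt_5 (f : ℝ → ℝ) (μ ν : Measure ℝ) [IsProbabilityMeasure μ] [IsProbabilityMeasure ν]
    (hμ : μ = volume.withDensity fun t => ENNReal.ofReal (f t))
    (q L r α₁ : ℝ) (hq : q ∈ Set.Ioo (1 / 2 : ℝ) 1) (hL : 0 < L) (hr : 0 < r)
    (hdens : ∀ t, |t - quantile μ q| ≤ r → L ≤ f t)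
    (hα : ∀ t, |rcdf μ t - rcdf ν t| ≤ α₁)
    (hsmall : 2 * α₁ / L < r) :
    |quantile μ q - quantile ν q| ≤ 2 * α₁ / L := by
  have hq0 : (0:ℝ) < q := by linarith [hq.1]
  have hα0 : 0 ≤ α₁ := le_trans (abs_nonneg _) (hα 0)
  rcases eq_or_lt_of_le hα0 with h0 | hpos
  · -- α₁ = 0 : the cdfs agree, quantiles agree
    have hcdf : rcdf μ = rcdf ν := funext fun t => by
      have h1 := abs_le.mp (hα t)
      linarith [h1.1, h1.2]
    have : quantile μ q = quantile ν q := by unfold quantile; rw [hcdf]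
    rw [this, sub_self, abs_zero]
    positivity
  · set Qμ := quantile μ q with hQμdef
    set δ : ℝ := 2 * α₁ / L with hδdef
    set ε : ℝ := α₁ / (2 * L) with hεdef
    have hLδ : L * δ = 2 * α₁ := by rw [hδdef]; field_simp
    have hLε : L * ε = α₁ / 2 := by rw [hεdef]; field_simp
    have hε0 : 0 < ε := by positivity
    have hδ0 : 0 < δ := by positivity
    have hεδ : ε < δ := by
      rw [hεdef, hδdef]
      rw [div_lt_div_iff₀ (by positivity) hL]
      nlinarith
    -- key density estimate
    have hkey : ∀ a b : ℝ, a ≤ b → Qμ - r ≤ a → b ≤ Qμ + r →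
        rcdf μ a + L * (b - a) ≤ rcdf μ b := by
      intro a b hab ha hb
      have hIoc : μ (Set.Ioc a b) = ∫⁻ t in Set.Ioc a b, ENNReal.ofReal (f t) := by
        rw [hμ, withDensity_apply _ measurableSet_Ioc]
      have hlow : ENNReal.ofReal (L * (b - a)) ≤ μ (Set.Ioc a b) := by
        rw [hIoc]
        calc ENNReal.ofReal (L * (b - a))
            = ∫⁻ _ in Set.Ioc a b, ENNReal.ofReal L ∂volume := by
              rw [setLIntegral_const, Real.volume_Ioc, ← ENNReal.ofReal_mul hL.le]
          _ ≤ _ := by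
              refine lintegral_mono_ae ((ae_restrict_iff' measurableSet_Ioc).2
                (Filter.Eventually.of_forall fun t ht => ?_))
              refine ENNReal.ofReal_le_ofReal (hdens t (abs_le.2 ⟨?_, ?_⟩))
              · linarith [ht.1]
              · linarith [ht.2]
      have hsplit : μ (Set.Iic b) = μ (Set.Iic a) + μ (Set.Ioc a b) := by
        rw [← Set.Iic_union_Ioc_eq_Iic hab,
          measure_union (Set.Iic_disjoint_Ioc le_rfl) measurableSet_Ioc]
      have hIocR : L * (b - a) ≤ (μ (Set.Ioc a b)).toReal := by
        have := ENNReal.toReal_mono (measure_ne_top μ _) hlow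
        rwa [ENNReal.toReal_ofReal (by nlinarith)] at this
      have : rcdf μ b = rcdf μ a + (μ (Set.Ioc a b)).toReal := by
        unfold rcdf
        rw [hsplit, ENNReal.toReal_add (measure_ne_top μ _) (measure_ne_top μ _)]
      linarith
    -- quantile set facts for μ
    have hSne : Set.Nonempty {t | q ≤ rcdf μ t} := by
      obtain ⟨t, ht⟩ := exists_lt_rcdf μ hq.2
      exact ⟨t, ht.le⟩
    have hSbdd := bddBelow_q_set μ hq0
    have hSνbdd := bddBelow_q_set ν hq0
    have hQ : Qμ = sInf {t | q ≤ rcdf μ t} := rfl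
    -- pick t in the set close to Qμ
    obtain ⟨t, htS, htlt⟩ := exists_lt_of_csInf_lt hSne
      (show sInf {t | q ≤ rcdf μ t} < Qμ + ε by rw [← hQ]; linarith)
    have htge : Qμ ≤ t := by rw [hQ]; exact csInf_le hSbdd htS
    -- upper bound : rcdf ν (Qμ + δ) ≥ q
    have h1 : rcdf μ t + L * (Qμ + δ - t) ≤ rcdf μ (Qμ + δ) :=
      hkey t (Qμ + δ) (by linarith) (by linarith) (by linarith)
    have hmul1 : L * (δ - ε) ≤ L * (Qμ + δ - t) :=
      mul_le_mul_of_nonneg_left (by linarith) hL.le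
    have hαt := abs_le.mp (hα (Qμ + δ))
    have h2 : q ≤ rcdf ν (Qμ + δ) := by
      have : (q : ℝ) ≤ rcdf μ t := htS
      linarith [hαt.1, hαt.2]
    have hQν_le : quantile ν q ≤ Qμ + δ := csInf_le hSνbdd h2
    -- lower bound
    have hnotin : rcdf μ (Qμ - ε) < q := by
      by_contra hc
      push_neg at hc
      have := csInf_le hSbdd (show Qμ - ε ∈ {t | q ≤ rcdf μ t} from hc)
      rw [← hQ] at this
      linarith
    have h3 : rcdf μ (Qμ - δ) + L * ((Qμ - ε) - (Qμ - δ)) ≤ rcdf μ (Qμ - ε) :=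
      hkey (Qμ - δ) (Qμ - ε) (by linarith) (by linarith) (by linarith)
    have hQν_ge : Qμ - δ ≤ quantile ν q := by
      refine le_csInf ⟨Qμ + δ, h2⟩ fun s hs => ?_
      by_contra hc
      push_neg at hc
      have hms : rcdf μ s ≤ rcdf μ (Qμ - δ) := rcdf_mono μ (by linarith)
      have hαs := abs_le.mp (hα s)
      have hqs : q ≤ rcdf ν s := hs
      have : L * ((Qμ - ε) - (Qμ - δ)) = L * (δ - ε) := by ring_nf
      linarith [hαs.1, hαs.2]
    rw [abs_le]
    constructor <;> [linarith; linarith]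
end

section
/- Fix R > 0 and let K_1, K_2 \subseteq B(0,R) be convex bodies in R^d. Then for every x \in R^d, \|P_{K_1}(x) - P_{K_2}(x)\|_2 \le 2\sqrt{\|x\|_2 + R} \cdot \delta_{Haus}(K_1, K_2)^{1/2}, where P_K denotes the nearest-point projection onto K and \delta_{Haus} is the Hausdorff distance. -/
open InnerProductSpace

lemma var_ineq {E : Type*} [NormedAddCommGroup E] [InnerProductSpace ℝ E]
    {K : Set E} (hK : Convex ℝ K) {p x : E} (hp : p ∈ K)
    (hmin : ∀ z ∈ K, ‖p - x‖ ≤ ‖z - x‖) {z : E} (hz : z ∈ K) :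
    ⟪x - p, z - p⟫_ℝ ≤ 0 := by
  have hne : K.Nonempty := ⟨p, hp⟩
  haveI := hne.to_subtype
  have h : ‖x - p‖ = ⨅ w : K, ‖x - w‖ := by
    refine le_antisymm ?_ ?_
    · refine le_ciInf fun w => ?_
      rw [norm_sub_rev, norm_sub_rev x]
      exact hmin w w.2
    · exact ciInf_le ⟨0, by rintro y ⟨w, rfl⟩; exact norm_nonneg _⟩ (⟨p, hp⟩ : K)
  exact (norm_eq_iInf_iff_real_inner_le_zero hK hp).1 h z hz

/-- 1/2-Hölder stability of projections: for convex bodies `K₁, K₂ ⊆ B(0,R)` and any `x`,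
`‖P_{K₁}(x) - P_{K₂}(x)‖ ≤ 2 √(‖x‖ + R) ⋅ δ_Haus(K₁,K₂)^{1/2}`. -/
theorem stmt_8 {d : ℕ} (R : ℝ) (hR : 0 < R)
    (K₁ K₂ : Set (EuclideanSpace ℝ (Fin d)))
    (h₁ : K₁.Nonempty) (h₂ : K₂.Nonempty) (hc₁ : IsCompact K₁) (hc₂ : IsCompact K₂)
    (hv₁ : Convex ℝ K₁) (hv₂ : Convex ℝ K₂)
    (hb₁ : K₁ ⊆ Metric.closedBall 0 R) (hb₂ : K₂ ⊆ Metric.closedBall 0 R)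
    (x p₁ p₂ : EuclideanSpace ℝ (Fin d))
    (hp₁ : p₁ ∈ K₁ ∧ ∀ z ∈ K₁, ‖p₁ - x‖ ≤ ‖z - x‖)
    (hp₂ : p₂ ∈ K₂ ∧ ∀ z ∈ K₂, ‖p₂ - x‖ ≤ ‖z - x‖) :
    ‖p₁ - p₂‖ ≤ 2 * Real.sqrt (‖x‖ + R) * Real.sqrt (Metric.hausdorffDist K₁ K₂) := by
  set δ := Metric.hausdorffDist K₁ K₂ with hδ
  have hδ0 : 0 ≤ δ := Metric.hausdorffDist_nonneg
  have hfin : EMetric.hausdorffEdist K₁ K₂ ≠ ⊤ :=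
    Metric.hausdorffEdist_ne_top_of_nonempty_of_bounded h₁ h₂
      hc₁.isBounded hc₂.isBounded
  -- points realizing infDist
  obtain ⟨q₂, hq₂K, hq₂⟩ := hc₂.exists_infDist_eq_dist h₂ p₁
  obtain ⟨q₁, hq₁K, hq₁⟩ := hc₁.exists_infDist_eq_dist h₁ p₂
  have hd₁ : dist p₁ q₂ ≤ δ := by
    rw [← hq₂]; exact Metric.infDist_le_hausdorffDist_of_mem hp₁.1 hfin
  have hd₂ : dist p₂ q₁ ≤ δ := by
    rw [← hq₁, hδ, Metric.hausdorffDist_comm]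
    exact Metric.infDist_le_hausdorffDist_of_mem hp₂.1
      (by rw [Metric.hausdorffEDist_comm]; exact hfin)
  have hn₁ : ‖x - p₁‖ ≤ ‖x‖ + R := by
    have := Metric.mem_closedBall.1 (hb₁ hp₁.1)
    simp only [dist_zero_right] at this
    calc ‖x - p₁‖ ≤ ‖x‖ + ‖p₁‖ := norm_sub_le _ _
      _ ≤ ‖x‖ + R := by have : dist p₁ 0 ≤ R := hb₁ hp₁.1; simp [dist_zero_right] at this; linarith
  have hn₂ : ‖x - p₂‖ ≤ ‖x‖ + R := by
    calc ‖x - p₂‖ ≤ ‖x‖ + ‖p₂‖ := norm_sub_le _ _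
      _ ≤ ‖x‖ + R := by have : dist p₂ 0 ≤ R := hb₂ hp₂.1; simp [dist_zero_right] at this; linarith
  have hv1 := var_ineq hv₁ hp₁.1 hp₁.2 hq₁K
  have hv2 := var_ineq hv₂ hp₂.1 hp₂.2 hq₂K
  -- key: ‖p₁ - p₂‖² ≤ 2(‖x‖+R)δ
  have key : ‖p₁ - p₂‖ ^ 2 ≤ 2 * (‖x‖ + R) * δ := by
    have e1 : ⟪x - p₁, p₂ - p₁⟫_ℝ = ⟪x - p₁, q₁ - p₁⟫_ℝ + ⟪x - p₁, p₂ - q₁⟫_ℝ := by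
      rw [← inner_add_right]; congr 1; abel
    have e2 : ⟪x - p₂, p₁ - p₂⟫_ℝ = ⟪x - p₂, q₂ - p₂⟫_ℝ + ⟪x - p₂, p₁ - q₂⟫_ℝ := by
      rw [← inner_add_right]; congr 1; abel
    have b1 : ⟪x - p₁, p₂ - q₁⟫_ℝ ≤ (‖x‖ + R) * δ := by
      calc ⟪x - p₁, p₂ - q₁⟫_ℝ ≤ ‖x - p₁‖ * ‖p₂ - q₁‖ := real_inner_le_norm _ _
        _ ≤ (‖x‖ + R) * δ := by
            apply mul_le_mul hn₁ ?_ (norm_nonneg _) (by positivity)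
            rw [← dist_eq_norm]; exact hd₂
    have b2 : ⟪x - p₂, p₁ - q₂⟫_ℝ ≤ (‖x‖ + R) * δ := by
      calc ⟪x - p₂, p₁ - q₂⟫_ℝ ≤ ‖x - p₂‖ * ‖p₁ - q₂‖ := real_inner_le_norm _ _
        _ ≤ (‖x‖ + R) * δ := by
            apply mul_le_mul hn₂ ?_ (norm_nonneg _) (by positivity)
            rw [← dist_eq_norm]; exact hd₁
    have expand : ‖p₁ - p₂‖ ^ 2 = ⟪x - p₁, p₂ - p₁⟫_ℝ + ⟪x - p₂, p₁ - p₂⟫_ℝ := by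
      have hsum : ⟪x - p₁, p₂ - p₁⟫_ℝ + ⟪x - p₂, p₁ - p₂⟫_ℝ
          = ⟪(x - p₁) - (x - p₂), p₂ - p₁⟫_ℝ := by
        rw [show (p₁ : EuclideanSpace ℝ (Fin d)) - p₂ = -(p₂ - p₁) by abel, inner_neg_right]
        simp only [inner_sub_left]
        ring
      rw [hsum, show (x - p₁) - (x - p₂) = p₂ - p₁ by abel,
        real_inner_self_eq_norm_sq, norm_sub_rev]
    linarith [e1, e2, b1, b2, hv1, hv2, expand]
  have hrhs : 2 * Real.sqrt (‖x‖ + R) * Real.sqrt δ = Real.sqrt (4 * (‖x‖ + R) * δ) := by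
    rw [Real.sqrt_mul (by positivity), Real.sqrt_mul (by norm_num : (0:ℝ) ≤ 4)]
    rw [show Real.sqrt 4 = 2 by rw [show (4:ℝ) = 2^2 by norm_num, Real.sqrt_sq (by norm_num)]]
    try ring
  calc ‖p₁ - p₂‖ = Real.sqrt (‖p₁ - p₂‖ ^ 2) := by rw [Real.sqrt_sq (norm_nonneg _)]
    _ ≤ Real.sqrt (4 * (‖x‖ + R) * δ) := by
        apply Real.sqrt_le_sqrt; nlinarith [key]
    _ = 2 * Real.sqrt (‖x‖ + R) * Real.sqrt δ := hrhs.symm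
end
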